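/- For every real x > 0 one has Σ_{n∈ℤ} ( (2πn)² - x ) / ( (2πn)² + x )² = -1 / ( 4·sinh²(√x/2) ), where the series converges absolutely. -/

import Mathlib

open Real

noncomputable section Stmt14Aux

open Complex MeasureTheory Set intervalIntegral

namespace Stmt14Aux

lemma integral_aux (α β c : ℂ) (hc : c ≠ 0) :
    ∫ t in (0:ℝ)..1, (α * t + β) * Complex.exp (-c * t)
      = (β / c + α / c ^ 2) - ((α + β) / c + α / c ^ 2) * Complex.exp (-c) := by
  have hG : ∀ z : ℂ, HasDerivAt (fun z : ℂ => -(((α * z + β) / c + α / c ^ 2) *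
      Complex.exp (-c * z))) ((α * z + β) * Complex.exp (-c * z)) z := by
    intro z
    have h1 : HasDerivAt (fun z : ℂ => (α * z + β) / c + α / c ^ 2) (α * 1 / c) z :=
      ((((hasDerivAt_id z).const_mul α).add_const β).div_const c).add_const _
    have h2 : HasDerivAt (fun z : ℂ => Complex.exp (-c * z)) (Complex.exp (-c * z) * (-c * 1)) z :=
      (Complex.hasDerivAt_exp _).comp z ((hasDerivAt_id z).const_mul (-c))
    have h := (h1.mul h2).neg
    refine h.congr_deriv ?_
    field_simp
    ring
  have hF : ∀ t ∈ Set.uIcc (0:ℝ) 1, HasDerivAt (fun t : ℝ => -(((α * (t:ℂ) + β) / c + α / c ^ 2) *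
      Complex.exp (-c * t))) ((α * t + β) * Complex.exp (-c * t)) t :=
    fun t _ => (hG t).comp_ofReal
  rw [intervalIntegral.integral_eq_sub_of_hasDerivAt hF
    (Continuous.intervalIntegrable (by fun_prop) _ _)]
  push_cast
  simp only [mul_zero, mul_one, Complex.ofReal_one, Complex.ofReal_zero, Complex.exp_zero]
  ring

variable {s : ℝ}

lemma hasSum_inv_sq (hs : 0 < s) :
    HasSum (fun n : ℤ => 1 / ((s : ℂ) + 2 * π * n * Complex.I) ^ 2)
      ((Real.exp (-s) : ℂ) / (1 - (Real.exp (-s) : ℂ)) ^ 2) := by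
  set e : ℝ := Real.exp (-s) with he
  have he0 : 0 < e := Real.exp_pos _
  have he1 : e < 1 := Real.exp_lt_one_iff.mpr (by linarith)
  have h1e : (1 : ℂ) - (e : ℂ) ≠ 0 := by
    rw [sub_ne_zero]
    intro h
    have : (1 : ℝ) = e := by exact_mod_cast h
    linarith
  set α : ℂ := 1 / (1 - (e : ℂ)) with hα
  set β : ℂ := (e : ℂ) / (1 - (e : ℂ)) ^ 2 with hβ
  have f1 : α * (1 - (e : ℂ)) = 1 := by rw [hα]; field_simp
  have f2 : β * (1 - (e : ℂ)) = α * e := by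
    rw [hα, hβ]; field_simp
  set a : ℤ → ℂ := fun n => (s : ℂ) + 2 * π * n * Complex.I with ha_def
  have ha : ∀ n : ℤ, a n ≠ 0 := by
    intro n h
    have := congrArg Complex.re h
    simp [ha_def] at this
    linarith
  set g : ℝ → ℂ := fun t => (α * t + β) * Complex.exp (-(s : ℂ) * t) with hg_def
  have hexp_s : Complex.exp (-(s : ℂ)) = (e : ℂ) := by
    rw [he, Complex.ofReal_exp, Complex.ofReal_neg]
  have hg10 : g 0 = g 1 := by
    simp only [hg_def, Complex.ofReal_zero, Complex.ofReal_one, mul_zero, mul_one, zero_add,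
      Complex.exp_zero, hexp_s]
    rw [hα, hβ]
    field_simp
    ring
  -- Fourier coefficients of `g` on `[0,1]` are `1 / (a n)^2`.
  have hcoeff : ∀ n : ℤ, fourierCoeffOn zero_lt_one g n = 1 / (a n) ^ 2 := by
    intro n
    rw [fourierCoeffOn_eq_integral]
    have hint : ∀ x : ℝ, fourier (-n) (x : AddCircle ((1:ℝ) - 0)) • g x
        = (α * x + β) * Complex.exp (-(a n) * x) := by
      intro x
      rw [fourier_coe_apply, smul_eq_mul, mul_comm, mul_assoc, ← Complex.exp_add]
      congr 1
      push_cast [ha_def]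
      ring
    simp_rw [hint]
    rw [integral_aux α β (a n) (ha n)]
    have hexp : Complex.exp (-(a n)) = (e : ℂ) := by
      have h2 : -(a n) = (-(s:ℂ)) + (-n : ℤ) * (2 * π * Complex.I) := by
        push_cast [ha_def]; ring
      rw [h2, Complex.exp_add, Complex.exp_int_mul_two_pi_mul_I, mul_one, hexp_s]
    rw [hexp]
    have hsmul : ((1:ℝ) / ((1:ℝ) - 0)) = (1:ℝ) := by norm_num
    rw [hsmul, one_smul]
    field_simp [ha n]
    linear_combination (a n) * f2 + f1
  -- summability of the coefficients
  have hsummable : Summable (fun n : ℤ => 1 / (a n) ^ 2) := by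
    apply Summable.of_norm_bounded_eventually (g := fun n : ℤ => (1 / (2*π)^2) * (1 / (n:ℝ)^2))
      (((Real.summable_one_div_int_pow (p := 2)).mpr one_lt_two).mul_left _)
    rw [Filter.eventually_cofinite]
    apply Set.Finite.subset (Set.finite_singleton 0)
    intro n hn
    simp only [Set.mem_setOf_eq, not_le] at hn
    simp only [Set.mem_singleton_iff]
    by_contra h0
    have hn0 : (n : ℝ) ≠ 0 := Int.cast_ne_zero.mpr h0
    have hnorm : ‖a n‖ ^ 2 = s ^ 2 + (2*π*n) ^ 2 := by
      rw [Complex.sq_norm, Complex.normSq_apply]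
      have hre : (a n).re = s := by simp [ha_def]
      have him : (a n).im = 2*π*n := by simp [ha_def]
      rw [hre, him]; ring
    have hb : ‖1 / (a n) ^ 2‖ ≤ (1 / (2*π)^2) * (1 / (n:ℝ)^2) := by
      have h1 : ‖1 / (a n) ^ 2‖ = 1 / ‖a n‖ ^ 2 := by
        rw [norm_div, norm_one, norm_pow]
      rw [h1, hnorm]
      have hpos : (0:ℝ) < (2*π*n)^2 := by positivity
      have : 1 / (s^2 + (2*π*n)^2) ≤ 1 / (2*π*n)^2 := by
        apply one_div_le_one_div_of_le hpos
        nlinarith [sq_nonneg s]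
      calc 1 / (s^2 + (2*π*n)^2) ≤ 1 / (2*π*n)^2 := this
        _ = 1 / (2*π)^2 * (1 / (n:ℝ)^2) := by rw [mul_pow]; ring
    exact absurd hb (not_le.mpr hn)
  -- continuity of the periodized function
  have hcont : Continuous (AddCircle.liftIco 1 0 g) := by
    apply AddCircle.liftIco_zero_continuous
    · exact hg10
    · exact (Continuous.continuousOn (by fun_prop))
  set B : C(AddCircle (1:ℝ), ℂ) := ⟨AddCircle.liftIco 1 0 g, hcont⟩ with hB
  have hcoeffB : ∀ n : ℤ, fourierCoeff B n = 1 / (a n) ^ 2 := by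
    intro n
    rw [hB, ContinuousMap.coe_mk, fourierCoeff_liftIco_eq]
    simpa only [zero_add] using hcoeff n
  have hsummB : Summable (fourierCoeff B) :=
    hsummable.congr fun n => (hcoeffB n).symm
  have hpt := has_pointwise_sum_fourier_series_of_summable hsummB (0 : AddCircle (1:ℝ))
  simp only [fourier_eval_zero, smul_eq_mul, mul_one] at hpt
  have hB0 : B 0 = β := by
    rw [hB, ContinuousMap.coe_mk, ← QuotientAddGroup.mk_zero,
      AddCircle.liftIco_coe_apply (by norm_num : (0:ℝ) ∈ Set.Ico (0:ℝ) (0+1))]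
    simp [hg_def]
  rw [hB0] at hpt
  exact hpt.congr_fun fun n => (hcoeffB n).symm

end Stmt14Aux

end Stmt14Aux

theorem stmt14 (x : ℝ) (hx : 0 < x) :
    Summable (fun n : ℤ => ((2 * π * (n : ℝ)) ^ 2 - x) / ((2 * π * (n : ℝ)) ^ 2 + x) ^ 2) ∧
    ∑' n : ℤ, ((2 * π * (n : ℝ)) ^ 2 - x) / ((2 * π * (n : ℝ)) ^ 2 + x) ^ 2
      = -1 / (4 * Real.sinh (Real.sqrt x / 2) ^ 2) := by
  set s : ℝ := Real.sqrt x with hs_def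
  have hs : 0 < s := Real.sqrt_pos.mpr hx
  have hsx : s ^ 2 = x := Real.sq_sqrt hx.le
  set e : ℝ := Real.exp (-s) with he
  have he0 : 0 < e := Real.exp_pos _
  have he1 : e < 1 := Real.exp_lt_one_iff.mpr (by linarith)
  have h := (Stmt14Aux.hasSum_inv_sq hs).neg
  have hre := Complex.reCLM.hasSum h
  -- identify the terms
  have hterm : ∀ n : ℤ, Complex.reCLM (-(1 / ((s : ℂ) + 2 * π * n * Complex.I) ^ 2))
      = ((2 * π * (n : ℝ)) ^ 2 - x) / ((2 * π * (n : ℝ)) ^ 2 + x) ^ 2 := by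
    intro n
    set z : ℂ := (s : ℂ) + 2 * π * n * Complex.I with hz
    have hzre : z.re = s := by simp [hz]
    have hzim : z.im = 2 * π * n := by simp [hz]
    have hnsq : Complex.normSq (z ^ 2) = ((2 * π * (n:ℝ)) ^ 2 + x) ^ 2 := by
      rw [map_pow, Complex.normSq_apply, hzre, hzim, ← hsx]; ring
    have hzsqre : (z ^ 2).re = x - (2 * π * (n:ℝ)) ^ 2 := by
      rw [pow_two, Complex.mul_re, hzre, hzim, ← hsx]; ring
    simp only [Complex.reCLM_apply, Complex.neg_re, one_div, Complex.inv_re, hnsq, hzsqre]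
    have hd : ((2 * π * (n:ℝ)) ^ 2 + x) ≠ 0 := by positivity
    field_simp
    ring
  have hre' : HasSum (fun n : ℤ => ((2 * π * (n : ℝ)) ^ 2 - x) / ((2 * π * (n : ℝ)) ^ 2 + x) ^ 2)
      (Complex.reCLM (-((e : ℂ) / (1 - (e : ℂ)) ^ 2))) := by
    refine (hre.congr_fun fun n => ?_)
    exact (hterm n).symm
  have hval : Complex.reCLM (-((e : ℂ) / (1 - (e : ℂ)) ^ 2))
      = -1 / (4 * Real.sinh (s / 2) ^ 2) := by
    have : (-((e : ℂ) / (1 - (e : ℂ)) ^ 2)) = ((-(e / (1 - e) ^ 2) : ℝ) : ℂ) := by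
      push_cast
      ring
    rw [this]
    simp only [Complex.reCLM_apply, Complex.ofReal_re]
    -- real computation
    set u : ℝ := Real.exp (s/2) with hu_def
    have hu0 : u ≠ 0 := (Real.exp_pos _).ne'
    have hee : e = u⁻¹ * u⁻¹ := by
      rw [he, hu_def, ← Real.exp_neg, ← Real.exp_add]
      congr 1
      ring
    have hsinh : Real.sinh (s / 2) = (u - u⁻¹) / 2 := by
      rw [Real.sinh_eq, hu_def, Real.exp_neg]
    have h1e' : 1 - u⁻¹ * u⁻¹ ≠ 0 := by rw [← hee]; linarith
    have hsh0 : u - u⁻¹ ≠ 0 := by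
      have := (Real.sinh_pos_iff.mpr (by linarith : 0 < s/2)).ne'
      rw [hsinh] at this
      intro hcon
      exact this (by rw [hcon]; norm_num)
    rw [hsinh, hee]
    have hC : u^2 - 1 ≠ 0 := by
      intro hc
      apply hsh0
      have h2 : u * u = 1 := by nlinarith
      rw [inv_eq_of_mul_eq_one_right h2, sub_self]
    have r1 : (1:ℝ) - u⁻¹ * u⁻¹ = (u^2-1)/u^2 := by field_simp
    have r2 : (u - u⁻¹) = (u^2-1)/u := by field_simp
    rw [r1, r2]
    field_simp
    ring
  rw [hval] at hre'
  exact ⟨hre'.summable, hre'.tsum_eq⟩
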